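/- Under the same hypotheses as the previous statement, the Bott–Chern type Laplacians satisfy Δ^{BC}_{d^Λ} = Δ^{BC}_{d^{Λ*}} + d^{Λ*}d^Λ - d^Λ d^{Λ*}, where Δ^{BC}_{d^{Λ*}} := d*d + d^Λ d^{Λ*} + d d^{Λ*} d^Λ d* + d^Λ dd*d^{Λ*} + d*d^{Λ*}d^Λ d + d^Λ d*dd^{Λ*}. -/
import Mathlib


/-- Under the same hypotheses as Proposition 2.7 of the paper (degree `±1` operators
`d, d*, dΛ, dΛ*` squaring to zero, with the anticommutation relations `[d,dΛ*] =
[d,dΛ] = [d*,dΛ] = [d*,dΛ*] = 0` and `Δ_d = Δ_{dΛ}`), the Bott–Chern type Laplacians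
satisfy `Δ^{BC}_{dΛ} = Δ^{BC}_{dΛ*} + dΛ* dΛ - dΛ dΛ*`, where
`Δ^{BC}_{dΛ*} = d*d + dΛ dΛ* + d dΛ* dΛ d* + dΛ d d* dΛ* + d* dΛ* dΛ d + dΛ d* d dΛ*`. -/
theorem bott_chern_laplacians_comparison
    {V : Type*} [AddCommGroup V] [Module ℂ V]
    (d dstar dLam dLamstar : Module.End ℂ V)
    (hd2 : d * d = 0) (hds2 : dstar * dstar = 0)
    (hdL2 : dLam * dLam = 0) (hdLs2 : dLamstar * dLamstar = 0)
    (h1 : d * dLamstar + dLamstar * d = 0)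
    (h2 : d * dLam + dLam * d = 0)
    (h3 : dstar * dLam + dLam * dstar = 0)
    (h4 : dstar * dLamstar + dLamstar * dstar = 0)
    (hDelta : d * dstar + dstar * d = dLam * dLamstar + dLamstar * dLam) :
    dstar * d + dLamstar * dLam +
      d * dLam * dLamstar * dstar + dLamstar * d * dstar * dLam +
      dstar * dLam * dLamstar * d + dLamstar * dstar * d * dLam =
    (dstar * d + dLam * dLamstar +
      d * dLamstar * dLam * dstar + dLam * d * dstar * dLamstar +
      dstar * dLamstar * dLam * d + dLam * dstar * d * dLamstar) +
      dLamstar * dLam - dLam * dLamstar := by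
  have hL : dLam * dLamstar = d * dstar + dstar * d - dLamstar * dLam :=
    eq_sub_of_add_eq hDelta.symm
  have hLs : dLamstar * dLam = d * dstar + dstar * d - dLam * dLamstar :=
    eq_sub_of_add_eq' hDelta.symm
  have hD : d * dstar = dLam * dLamstar + dLamstar * dLam - dstar * d :=
    eq_sub_of_add_eq hDelta
  have h1' : d * dLamstar = -(dLamstar * d) := eq_neg_of_add_eq_zero_left h1
  have h2' : d * dLam = -(dLam * d) := eq_neg_of_add_eq_zero_left h2
  have h3' : dstar * dLam = -(dLam * dstar) := eq_neg_of_add_eq_zero_left h3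
  have h4' : dstar * dLamstar = -(dLamstar * dstar) := eq_neg_of_add_eq_zero_left h4
  -- left-hand side quartic terms
  have t1 : d * dLam * dLamstar * dstar
      = d * dstar * d * dstar - d * dLamstar * dLam * dstar := by
    calc d * dLam * dLamstar * dstar = d * (dLam * dLamstar) * dstar := by noncomm_ring
      _ = d * (d * dstar + dstar * d - dLamstar * dLam) * dstar := by rw [hL]
      _ = d * d * (dstar * dstar) + d * dstar * d * dstar
            - d * dLamstar * dLam * dstar := by noncomm_ring
      _ = _ := by rw [hd2]; noncomm_ring
  have t2 : dLamstar * d * dstar * dLam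
      = dLamstar * dLam * dLamstar * dLam - dLamstar * dstar * d * dLam := by
    calc dLamstar * d * dstar * dLam = dLamstar * (d * dstar) * dLam := by noncomm_ring
      _ = dLamstar * (dLam * dLamstar + dLamstar * dLam - dstar * d) * dLam := by rw [hD]
      _ = dLamstar * dLam * dLamstar * dLam + dLamstar * dLamstar * (dLam * dLam)
            - dLamstar * dstar * d * dLam := by noncomm_ring
      _ = _ := by rw [hdLs2]; noncomm_ring
  have t3 : dstar * dLam * dLamstar * d
      = dstar * d * dstar * d - dstar * dLamstar * dLam * d := by
    calc dstar * dLam * dLamstar * d = dstar * (dLam * dLamstar) * d := by noncomm_ring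
      _ = dstar * (d * dstar + dstar * d - dLamstar * dLam) * d := by rw [hL]
      _ = dstar * dstar * (d * d) + dstar * d * dstar * d
            - dstar * dLamstar * dLam * d := by noncomm_ring
      _ = _ := by rw [hds2]; noncomm_ring
  have u1 : d * dLamstar * dLam * dstar = dLamstar * dLam * (d * dstar) := by
    calc d * dLamstar * dLam * dstar = -(dLamstar * d) * dLam * dstar := by rw [h1']
      _ = -(dLamstar * ((d * dLam) * dstar)) := by noncomm_ring
      _ = -(dLamstar * (-(dLam * d) * dstar)) := by rw [h2']
      _ = dLamstar * dLam * (d * dstar) := by noncomm_ring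
  have u2 : dstar * dLamstar * dLam * d = dLamstar * dLam * (dstar * d) := by
    calc dstar * dLamstar * dLam * d = -(dLamstar * dstar) * dLam * d := by rw [h4']
      _ = -(dLamstar * ((dstar * dLam) * d)) := by noncomm_ring
      _ = -(dLamstar * (-(dLam * dstar) * d)) := by rw [h3']
      _ = dLamstar * dLam * (dstar * d) := by noncomm_ring
  have u3 : dLamstar * dLam * (d * dstar) + dLamstar * dLam * (dstar * d)
      = dLamstar * dLam * dLamstar * dLam := by
    calc dLamstar * dLam * (d * dstar) + dLamstar * dLam * (dstar * d)
        = dLamstar * dLam * (d * dstar + dstar * d) := by noncomm_ring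
      _ = dLamstar * dLam * (dLam * dLamstar + dLamstar * dLam) := by rw [hDelta]
      _ = dLamstar * (dLam * dLam) * dLamstar
            + dLamstar * dLam * dLamstar * dLam := by noncomm_ring
      _ = _ := by rw [hdL2]; noncomm_ring
  have lemL : d * dLam * dLamstar * dstar + dLamstar * d * dstar * dLam +
      dstar * dLam * dLamstar * d + dLamstar * dstar * d * dLam
      = d * dstar * d * dstar + dstar * d * dstar * d := by
    rw [t1, t2, t3, u1, u2, ← u3]
    abel
  -- right-hand side quartic terms
  have v1 : d * dLamstar * dLam * dstar
      = d * dstar * d * dstar - d * dLam * dLamstar * dstar := by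
    calc d * dLamstar * dLam * dstar = d * (dLamstar * dLam) * dstar := by noncomm_ring
      _ = d * (d * dstar + dstar * d - dLam * dLamstar) * dstar := by rw [hLs]
      _ = d * d * (dstar * dstar) + d * dstar * d * dstar
            - d * dLam * dLamstar * dstar := by noncomm_ring
      _ = _ := by rw [hd2]; noncomm_ring
  have v2 : dLam * d * dstar * dLamstar
      = dLam * dLamstar * dLam * dLamstar - dLam * dstar * d * dLamstar := by
    calc dLam * d * dstar * dLamstar = dLam * (d * dstar) * dLamstar := by noncomm_ring
      _ = dLam * (dLam * dLamstar + dLamstar * dLam - dstar * d) * dLamstar := by rw [hD]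
      _ = dLam * dLam * (dLamstar * dLamstar) + dLam * dLamstar * dLam * dLamstar
            - dLam * dstar * d * dLamstar := by noncomm_ring
      _ = _ := by rw [hdL2]; noncomm_ring
  have v3 : dstar * dLamstar * dLam * d
      = dstar * d * dstar * d - dstar * dLam * dLamstar * d := by
    calc dstar * dLamstar * dLam * d = dstar * (dLamstar * dLam) * d := by noncomm_ring
      _ = dstar * (d * dstar + dstar * d - dLam * dLamstar) * d := by rw [hLs]
      _ = dstar * dstar * (d * d) + dstar * d * dstar * d
            - dstar * dLam * dLamstar * d := by noncomm_ring
      _ = _ := by rw [hds2]; noncomm_ring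
  have w1 : d * dLam * dLamstar * dstar = dLam * dLamstar * (d * dstar) := by
    calc d * dLam * dLamstar * dstar = -(dLam * d) * dLamstar * dstar := by rw [h2']
      _ = -(dLam * ((d * dLamstar) * dstar)) := by noncomm_ring
      _ = -(dLam * (-(dLamstar * d) * dstar)) := by rw [h1']
      _ = dLam * dLamstar * (d * dstar) := by noncomm_ring
  have w2 : dstar * dLam * dLamstar * d = dLam * dLamstar * (dstar * d) := by
    calc dstar * dLam * dLamstar * d = -(dLam * dstar) * dLamstar * d := by rw [h3']
      _ = -(dLam * ((dstar * dLamstar) * d)) := by noncomm_ring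
      _ = -(dLam * (-(dLamstar * dstar) * d)) := by rw [h4']
      _ = dLam * dLamstar * (dstar * d) := by noncomm_ring
  have w3 : dLam * dLamstar * (d * dstar) + dLam * dLamstar * (dstar * d)
      = dLam * dLamstar * dLam * dLamstar := by
    calc dLam * dLamstar * (d * dstar) + dLam * dLamstar * (dstar * d)
        = dLam * dLamstar * (d * dstar + dstar * d) := by noncomm_ring
      _ = dLam * dLamstar * (dLam * dLamstar + dLamstar * dLam) := by rw [hDelta]
      _ = dLam * (dLamstar * dLamstar) * dLam
            + dLam * dLamstar * dLam * dLamstar := by noncomm_ring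
      _ = _ := by rw [hdLs2]; noncomm_ring
  have lemR : d * dLamstar * dLam * dstar + dLam * d * dstar * dLamstar +
      dstar * dLamstar * dLam * d + dLam * dstar * d * dLamstar
      = d * dstar * d * dstar + dstar * d * dstar * d := by
    rw [v1, v2, v3, w1, w2, ← w3]
    abel
  calc dstar * d + dLamstar * dLam +
      d * dLam * dLamstar * dstar + dLamstar * d * dstar * dLam +
      dstar * dLam * dLamstar * d + dLamstar * dstar * d * dLam
      = dstar * d + dLamstar * dLam +
        (d * dLam * dLamstar * dstar + dLamstar * d * dstar * dLam +
        dstar * dLam * dLamstar * d + dLamstar * dstar * d * dLam) := by abel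
    _ = dstar * d + dLamstar * dLam +
        (d * dstar * d * dstar + dstar * d * dstar * d) := by rw [lemL]
    _ = dstar * d + dLamstar * dLam +
        (d * dLamstar * dLam * dstar + dLam * d * dstar * dLamstar +
        dstar * dLamstar * dLam * d + dLam * dstar * d * dLamstar) := by rw [← lemR]
    _ = _ := by abel
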